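/- Let 𝔤 be a finite-dimensional real semisimple Lie algebra, U an open connected subset of a finite-dimensional real normed space, and ξ : U → 𝔤 a complementary-pair configuration with parabolic bundles f, f̂ and 1-forms β, β̂; set 𝒩 := −β − β̂ (the pull-back of the solder form of the symmetric space Z of complementary pairs under φ = (f, f̂)). Then the following are equivalent: (i) ⁅𝒩_x(u), 𝒩_x(v)⁆ = 0 for all x, u, v (φ is a curved flat); (ii) β is closed; (iii) β̂ is closed. Moreover, when these hold, for every m ∈ ℝ∖{0} the pairs (f, β̂/m) and (f̂, β/m) are isothermic and each is a Darboux transform of the other with parameter m: f̂ is parallel for d + m·(β̂/m) and f is parallel for d + m·(β/m). -/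

import Mathlib

open Module

/-- A Lie algebra structure on a real normed space, recorded as a bilinear bracket.
(Using a bracket carried as data avoids typeclass diamonds between the normed and
the Lie-algebraic structure.) -/
structure LieStructure (L : Type*) [NormedAddCommGroup L] [NormedSpace ℝ L] where
  bracket : L →ₗ[ℝ] L →ₗ[ℝ] L
  alternating : ∀ x : L, bracket x x = 0
  jacobi : ∀ x y z : L, bracket x (bracket y z) =
    bracket (bracket x y) z + bracket y (bracket x z)

namespace LieStructure

variable {L : Type*} [NormedAddCommGroup L] [NormedSpace ℝ L] (B : LieStructure L)

/-- The adjoint action `ad x = ⁅x, ·⁆`. -/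
def ad (x : L) : Module.End ℝ L := B.bracket x

/-- The Killing form `κ(x, y) = tr (ad x ∘ ad y)`. -/
noncomputable def killing (x y : L) : ℝ := LinearMap.trace ℝ L (B.ad x * B.ad y)

/-- Semisimplicity, via Cartan's criterion: the Killing form is nondegenerate. -/
def IsSemisimple : Prop := ∀ x : L, (∀ y : L, B.killing x y = 0) → x = 0

/-- A Lie subalgebra: a submodule closed under the bracket. -/
def IsSubalgebra (p : Submodule ℝ L) : Prop :=
  ∀ x ∈ p, ∀ y ∈ p, B.bracket x y ∈ p

/-- The Killing polar `𝔭^⊥`. -/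
noncomputable def polar (p : Submodule ℝ L) : Submodule ℝ L where
  carrier := {x | ∀ y ∈ p, B.killing x y = 0}
  add_mem' := fun {a b} ha hb y hy => by
    have : B.killing (a + b) y = B.killing a y + B.killing b y := by
      simp [killing, ad, map_add, add_mul]
    rw [this, ha y hy, hb y hy, add_zero]
  zero_mem' := fun y hy => by simp [killing, ad, map_zero, zero_mul]
  smul_mem' := fun c a ha y hy => by
    have : B.killing (c • a) y = c * B.killing a y := by
      simp [killing, ad, map_smul, smul_mul_assoc]
    rw [this, ha y hy, mul_zero]

/-- A height-one parabolic subalgebra: a subalgebra whose Killing polar is an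
abelian (hence nilpotent) subalgebra. -/
def IsH1Parabolic (p : Submodule ℝ L) : Prop :=
  B.IsSubalgebra p ∧ ∀ x ∈ B.polar p, ∀ y ∈ B.polar p, B.bracket x y = 0

/-- Complementary pair of height-one parabolic subalgebras:
`𝔤 = 𝔭 ⊕ 𝔮^⊥` and `𝔤 = 𝔮 ⊕ 𝔭^⊥`. -/
noncomputable def ComplPair (p q : Submodule ℝ L) : Prop :=
  IsCompl p (B.polar q) ∧ IsCompl q (B.polar p)

/-- `exp (ad z)`, the finite exponential series of the adjoint action (exhaustive
whenever `ad z` is nilpotent, since then `(ad z)^(dim 𝔤 + 1) = 0`). -/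
noncomputable def expAd [FiniteDimensional ℝ L] (z : L) : Module.End ℝ L :=
  ∑ k ∈ Finset.range (Module.finrank ℝ L + 1), (k.factorial : ℝ)⁻¹ • (B.ad z) ^ k

end LieStructure

namespace LieStructure

variable {L : Type*} [NormedAddCommGroup L] [NormedSpace ℝ L] (B : LieStructure L)

/-- The `j`-eigenspace `𝔤_j(x) = ker (ad ξ(x) − j·id)` of a complementary-pair
configuration. -/
noncomputable def eigSp (ξx : L) (j : ℝ) : Submodule ℝ L :=
  LinearMap.ker (B.ad ξx - j • (1 : Module.End ℝ L))

variable {E : Type*} [NormedAddCommGroup E] [NormedSpace ℝ E]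

/-- The 1-form `β`, the `𝔤₁`-part of `dξ`: `β_x(u) = ½((ad ξ(x))² + ad ξ(x))(dξ_x(u))`. -/
noncomputable def beta [FiniteDimensional ℝ L] (ξ : E → L) (x : E) : E →L[ℝ] L :=
  (LinearMap.toContinuousLinearMap
    ((2⁻¹ : ℝ) • ((B.ad (ξ x)) ^ 2 + B.ad (ξ x)))).comp (fderiv ℝ ξ x)

/-- The 1-form `β̂`, the `𝔤₋₁`-part of `dξ`:
`β̂_x(u) = −½((ad ξ(x))² − ad ξ(x))(dξ_x(u))`. -/
noncomputable def betaHat [FiniteDimensional ℝ L] (ξ : E → L) (x : E) : E →L[ℝ] L :=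
  (LinearMap.toContinuousLinearMap
    (-((2⁻¹ : ℝ) • ((B.ad (ξ x)) ^ 2 - B.ad (ξ x))))).comp (fderiv ℝ ξ x)

end LieStructure

open LieStructure



namespace LieStructure
variable {L : Type*} [NormedAddCommGroup L] [NormedSpace ℝ L] (B : LieStructure L)

lemma antisymm (a b : L) : B.bracket a b = - B.bracket b a := by
  have h := B.alternating (a + b)
  simp only [map_add, LinearMap.add_apply, B.alternating, zero_add, add_zero] at h
  exact eq_neg_of_add_eq_zero_right h

section Eigen
variable (z : L)

omit [NormedAddCommGroup L] [NormedSpace ℝ L] in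
lemma double_cancel {M : Type*} [AddCommGroup M] [Module ℝ M] {a r : M}
    (h : a + r + r = a) : r = 0 := by
  have h2 : r + r = 0 := add_left_cancel (by rw [add_zero, ← add_assoc]; exact h)
  have h3 : (2 : ℝ) • r = 0 := by rw [two_smul]; exact h2
  simpa using (smul_eq_zero.mp h3).resolve_left (by norm_num)

/-- kill eigenvectors with bad eigenvalue -/
lemma eigen_vanish (h3v : ∀ w, B.bracket z (B.bracket z (B.bracket z w)) = B.bracket z w)
    {v : L} {s : ℝ} (hv : B.bracket z v = s • v) (hs : s * s * s ≠ s) : v = 0 := by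
  have h := h3v v
  simp only [hv, map_smul, smul_smul] at h
  have : (s * s * s - s) • v = 0 := by
    rw [sub_smul, h, sub_self]
  rcases smul_eq_zero.mp this with h' | h'
  · exact absurd (sub_eq_zero.mp h') hs
  · exact h'

/-- derivation property of `ad z` -/
lemma der (a b : L) :
    B.bracket z (B.bracket a b) = B.bracket (B.bracket z a) b + B.bracket a (B.bracket z b) :=
  B.jacobi z a b

variable (h3v : ∀ w, B.bracket z (B.bracket z (B.bracket z w)) = B.bracket z w)
include h3v

lemma comp0_eig (w : L) : B.bracket z (w - B.bracket z (B.bracket z w)) = 0 := by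
  rw [map_sub, h3v, sub_self]

lemma compP_eig (w : L) :
    B.bracket z ((2⁻¹ : ℝ) • (B.bracket z (B.bracket z w) + B.bracket z w)) =
      (2⁻¹ : ℝ) • (B.bracket z (B.bracket z w) + B.bracket z w) := by
  rw [map_smul, map_add, h3v]; module

lemma compM_eig (w : L) :
    B.bracket z ((2⁻¹ : ℝ) • (B.bracket z (B.bracket z w) - B.bracket z w)) =
      -((2⁻¹ : ℝ) • (B.bracket z (B.bracket z w) - B.bracket z w)) := by
  rw [map_smul, map_sub, h3v]; module

omit h3v in
lemma comp_sum (w : L) :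
    (w - B.bracket z (B.bracket z w)) +
      (2⁻¹ : ℝ) • (B.bracket z (B.bracket z w) + B.bracket z w) +
      (2⁻¹ : ℝ) • (B.bracket z (B.bracket z w) - B.bracket z w) = w := by
  module

end Eigen
end LieStructure

namespace LieStructure
variable {L : Type*} [NormedAddCommGroup L] [NormedSpace ℝ L] (B : LieStructure L)

section Key2
variable (z : L)

lemma eig_bracket {a b : L} {s t : ℝ} (ha : B.bracket z a = s • a)
    (hb : B.bracket z b = t • b) :
    B.bracket z (B.bracket a b) = (s + t) • B.bracket a b := by
  rw [der, ha, hb]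
  simp only [map_smul, LinearMap.smul_apply]
  rw [add_smul]

variable (h3v : ∀ w, B.bracket z (B.bracket z (B.bracket z w)) = B.bracket z w)
include h3v

lemma eta0_bracket_zero (η : L)
    (hst : ∀ w, B.bracket η (B.bracket z (B.bracket z w)) +
      B.bracket z (B.bracket η (B.bracket z w)) +
      B.bracket z (B.bracket z (B.bracket η w)) = B.bracket η w)
    (w : L) : B.bracket (η - B.bracket z (B.bracket z η)) w = 0 := by
  set η0 := η - B.bracket z (B.bracket z η) with hη0def
  set ηP := (2⁻¹ : ℝ) • (B.bracket z (B.bracket z η) + B.bracket z η) with hηPdef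
  set ηM := (2⁻¹ : ℝ) • (B.bracket z (B.bracket z η) - B.bracket z η) with hηMdef
  have e0 : B.bracket z η0 = (0 : ℝ) • η0 := by
    rw [zero_smul]; exact B.comp0_eig z h3v η
  have eP : B.bracket z ηP = (1 : ℝ) • ηP := by
    rw [one_smul]; exact B.compP_eig z h3v η
  have eM : B.bracket z ηM = (-1 : ℝ) • ηM := by
    rw [neg_smul, one_smul]; exact B.compM_eig z h3v η
  have hsum : η0 + ηP + ηM = η := B.comp_sum z η
  have key1 : ∀ w, B.bracket z w = w → B.bracket η0 w = 0 := by
    intro w hw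
    have hw1 : B.bracket z w = (1 : ℝ) • w := by rw [hw, one_smul]
    have hp : B.bracket ηP w = 0 := by
      refine B.eigen_vanish z h3v (s := 2) ?_ (by norm_num)
      rw [B.eig_bracket z eP hw1]; norm_num
    have hbq : B.bracket z (B.bracket ηM w) = 0 := by
      rw [B.eig_bracket z eM hw1]; norm_num
    have hbr : B.bracket z (B.bracket η0 w) = B.bracket η0 w := by
      rw [B.eig_bracket z e0 hw1]; norm_num
    have hv : B.bracket η w = B.bracket η0 w + B.bracket ηM w := by
      conv_lhs => rw [← hsum]
      simp only [map_add, LinearMap.add_apply, hp]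
      abel
    set r := B.bracket η0 w with hrdef
    set q := B.bracket ηM w with hqdef
    have ha' := hst w
    rw [hw, hw, hv] at ha'
    have hb1 : B.bracket z (r + q) = r := by rw [map_add, hbr, hbq, add_zero]
    rw [hb1, hbr] at ha'
    exact double_cancel ha'
  have key2 : ∀ w, B.bracket z w = -w → B.bracket η0 w = 0 := by
    intro w hw
    have hw1 : B.bracket z w = (-1 : ℝ) • w := by rw [hw, neg_smul, one_smul]
    have hq : B.bracket ηM w = 0 := by
      refine B.eigen_vanish z h3v (s := -2) ?_ (by norm_num)
      rw [B.eig_bracket z eM hw1]; norm_num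
    have hbp : B.bracket z (B.bracket ηP w) = 0 := by
      rw [B.eig_bracket z eP hw1]; norm_num
    have hbr : B.bracket z (B.bracket η0 w) = -(B.bracket η0 w) := by
      rw [B.eig_bracket z e0 hw1]; norm_num
    have hv : B.bracket η w = B.bracket η0 w + B.bracket ηP w := by
      conv_lhs => rw [← hsum]
      simp only [map_add, LinearMap.add_apply, hq]
      abel
    set r := B.bracket η0 w with hrdef
    set p := B.bracket ηP w with hpdef
    have ha' := hst w
    simp only [hw, map_neg, neg_neg] at ha'
    rw [hv] at ha'
    have hb1 : B.bracket z (r + p) = -r := by rw [map_add, hbr, hbp, add_zero]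
    have hb2 : B.bracket z (-r) = r := by rw [map_neg, hbr, neg_neg]
    rw [hb1, hb2] at ha'
    simp only [neg_neg] at ha'
    exact double_cancel ha'
  have key3 : ∀ w, B.bracket z w = 0 → B.bracket η0 w = 0 := by
    intro w hw
    have hw1 : B.bracket z w = (0 : ℝ) • w := by rw [hw, zero_smul]
    have hbp : B.bracket z (B.bracket ηP w) = B.bracket ηP w := by
      rw [B.eig_bracket z eP hw1]; norm_num
    have hbq : B.bracket z (B.bracket ηM w) = -(B.bracket ηM w) := by
      rw [B.eig_bracket z eM hw1]; norm_num
    have hbr : B.bracket z (B.bracket η0 w) = 0 := by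
      rw [B.eig_bracket z e0 hw1]; norm_num
    have hv : B.bracket η w = B.bracket η0 w + B.bracket ηP w + B.bracket ηM w := by
      conv_lhs => rw [← hsum]
      simp only [map_add, LinearMap.add_apply]
    set r := B.bracket η0 w with hrdef
    set p := B.bracket ηP w with hpdef
    set q := B.bracket ηM w with hqdef
    have ha' := hst w
    simp only [hw, map_zero, zero_add] at ha'
    rw [hv] at ha'
    have hb1 : B.bracket z (r + p + q) = p + -q := by
      rw [map_add, map_add, hbr, hbp, hbq, zero_add]
    have hb2 : B.bracket z (p + -q) = p + q := by
      rw [map_add, hbp, map_neg, hbq, neg_neg]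
    rw [hb1, hb2] at ha'
    have h2 : r + (p + q) = 0 + (p + q) := by rw [zero_add, ← add_assoc]; exact ha'.symm
    exact add_right_cancel h2
  -- general w
  conv_lhs => rw [← B.comp_sum z w]
  rw [map_add, map_add,
    key3 _ (B.comp0_eig z h3v w), key1 _ (B.compP_eig z h3v w), key2 _ (B.compM_eig z h3v w)]
  simp

lemma eta0 (hss : B.IsSemisimple) (η : L)
    (hst : ∀ w, B.bracket η (B.bracket z (B.bracket z w)) +
      B.bracket z (B.bracket η (B.bracket z w)) +
      B.bracket z (B.bracket z (B.bracket η w)) = B.bracket η w) :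
    B.bracket z (B.bracket z η) = η := by
  have hker := B.eta0_bracket_zero z h3v η hst
  have hzero : η - B.bracket z (B.bracket z η) = 0 := by
    apply hss
    intro y
    have had : B.ad (η - B.bracket z (B.bracket z η)) = 0 :=
      LinearMap.ext fun w => hker w
    show LinearMap.trace ℝ L (B.ad _ * B.ad y) = 0
    rw [had, zero_mul, map_zero]
  exact (sub_eq_zero.mp hzero).symm

end Key2
end LieStructure

namespace LieStructure
variable {L : Type*} [NormedAddCommGroup L] [NormedSpace ℝ L] (B : LieStructure L)

section BC
variable [FiniteDimensional ℝ L]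

/-- the bracket as a continuous bilinear map -/
noncomputable def bc : L →L[ℝ] L →L[ℝ] L :=
  LinearMap.toContinuousLinearMap
    { toFun := fun a => LinearMap.toContinuousLinearMap (B.bracket a)
      map_add' := by intro a b; ext w; simp
      map_smul' := by intro c a; ext w; simp }

@[simp] lemma bc_apply (a b : L) : B.bc a b = B.bracket a b := by
  simp [bc]

variable {E : Type*} [NormedAddCommGroup E] [NormedSpace ℝ E]

/-- derivative of a pointwise bracket -/
noncomputable def brD (a b : L) (f' g' : E →L[ℝ] L) : E →L[ℝ] L :=
  (B.bc a).comp g' + (B.bc.comp f').flip b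

@[simp] lemma brD_apply (a b : L) (f' g' : E →L[ℝ] L) (u : E) :
    B.brD a b f' g' u = B.bracket a (g' u) + B.bracket (f' u) b := by
  simp [brD]

lemma hasFDerivAt_bracket {f g : E → L} {f' g' : E →L[ℝ] L} {x : E}
    (hf : HasFDerivAt f f' x) (hg : HasFDerivAt g g' x) :
    HasFDerivAt (fun y => B.bracket (f y) (g y)) (B.brD (f x) (g x) f' g') x := by
  have hc : HasFDerivAt (fun y => B.bc (f y)) (B.bc.comp f') x := by
    exact (B.bc.hasFDerivAt.comp x hf : _)
  have h1 := hc.clm_apply hg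
  have h2 : (fun y => B.bracket (f y) (g y)) = fun y => B.bc (f y) (g y) := by
    funext y; simp
  rw [h2]
  exact h1

end BC

section EigSp
variable (z : L)

lemma mem_eigSp {v : L} {j : ℝ} : v ∈ B.eigSp z j ↔ B.bracket z v = j • v := by
  simp only [eigSp, LinearMap.mem_ker, LinearMap.sub_apply, LinearMap.smul_apply,
    Module.End.one_apply, sub_eq_zero]
  rfl

variable (h3v : ∀ w, B.bracket z (B.bracket z (B.bracket z w)) = B.bracket z w)
include h3v

lemma mem_sup01 {v : L} :
    v ∈ B.eigSp z 0 ⊔ B.eigSp z 1 ↔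
      B.bracket z (B.bracket z v) = B.bracket z v := by
  constructor
  · rintro h
    rcases Submodule.mem_sup.mp h with ⟨a, ha, b, hb, rfl⟩
    rw [B.mem_eigSp] at ha hb
    rw [zero_smul] at ha; rw [one_smul] at hb
    simp only [map_add, ha, hb, zero_add]
  · intro hv
    refine Submodule.mem_sup.mpr ⟨v - B.bracket z (B.bracket z v), ?_,
      B.bracket z (B.bracket z v), ?_, by abel⟩
    · rw [B.mem_eigSp, zero_smul, map_sub, h3v, sub_self]
    · rw [B.mem_eigSp, one_smul, h3v, hv]

lemma mem_supm0 {v : L} :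
    v ∈ B.eigSp z (-1) ⊔ B.eigSp z 0 ↔
      B.bracket z (B.bracket z v) = -(B.bracket z v) := by
  constructor
  · rintro h
    rcases Submodule.mem_sup.mp h with ⟨a, ha, b, hb, rfl⟩
    rw [B.mem_eigSp] at ha hb
    rw [zero_smul] at hb; rw [neg_smul, one_smul] at ha
    simp only [map_add, ha, hb, add_zero, map_neg, neg_neg]
  · intro hv
    refine Submodule.mem_sup.mpr ⟨B.bracket z (B.bracket z v), ?_,
      v - B.bracket z (B.bracket z v), ?_, by abel⟩
    · rw [B.mem_eigSp, neg_smul, one_smul, h3v, hv, neg_neg]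
    · rw [B.mem_eigSp, zero_smul, map_sub, h3v, sub_self]

end EigSp
end LieStructure

namespace LieStructure
variable {L : Type*} [NormedAddCommGroup L] [NormedSpace ℝ L] (B : LieStructure L)

section VectorKeys
variable (z : L)
variable (h3v : ∀ w, B.bracket z (B.bracket z (B.bracket z w)) = B.bracket z w)
include h3v

lemma curved_key {η ζ : L} (hη : B.bracket z (B.bracket z η) = η)
    (hζ : B.bracket z (B.bracket z ζ) = ζ) :
    B.bracket z (B.bracket η ζ) = 0 ∧
    B.bracket (B.bracket z η) (B.bracket z ζ) = -(B.bracket η ζ) := by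
  set a := (2⁻¹ : ℝ) • (η + B.bracket z η) with hadef
  set b := (2⁻¹ : ℝ) • (η - B.bracket z η) with hbdef
  set c := (2⁻¹ : ℝ) • (ζ + B.bracket z ζ) with hcdef
  set d := (2⁻¹ : ℝ) • (ζ - B.bracket z ζ) with hddef
  have ea : B.bracket z a = (1 : ℝ) • a := by
    rw [hadef, map_smul, map_add, hη]; module
  have eb : B.bracket z b = (-1 : ℝ) • b := by
    rw [hbdef, map_smul, map_sub, hη]; module
  have ec : B.bracket z c = (1 : ℝ) • c := by
    rw [hcdef, map_smul, map_add, hζ]; module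
  have ed : B.bracket z d = (-1 : ℝ) • d := by
    rw [hddef, map_smul, map_sub, hζ]; module
  have hab : a + b = η := by rw [hadef, hbdef]; module
  have hcd : c + d = ζ := by rw [hcdef, hddef]; module
  have hac : B.bracket a c = 0 := by
    refine B.eigen_vanish z h3v (s := 2) ?_ (by norm_num)
    rw [B.eig_bracket z ea ec]; norm_num
  have hbd : B.bracket b d = 0 := by
    refine B.eigen_vanish z h3v (s := -2) ?_ (by norm_num)
    rw [B.eig_bracket z eb ed]; norm_num
  have had : B.bracket z (B.bracket a d) = 0 := by
    rw [B.eig_bracket z ea ed]; norm_num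
  have hbc : B.bracket z (B.bracket b c) = 0 := by
    rw [B.eig_bracket z eb ec]; norm_num
  have hprod : B.bracket η ζ = B.bracket a d + B.bracket b c := by
    conv_lhs => rw [← hab, ← hcd]
    simp only [map_add, LinearMap.add_apply, hac, hbd]
    abel
  constructor
  · rw [hprod, map_add, had, hbc, add_zero]
  · have hza : B.bracket z η = a - b := by
      conv_lhs => rw [← hab]
      rw [map_add, ea, eb]; module
    have hzc : B.bracket z ζ = c - d := by
      conv_lhs => rw [← hcd]
      rw [map_add, ec, ed]; module
    rw [hza, hzc, hprod]
    simp only [map_sub, LinearMap.sub_apply, hac, hbd]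
    abel

lemma parallel_keyP {η ψ D : L} (hη : B.bracket z (B.bracket z η) = η)
    (hψ : B.bracket z (B.bracket z ψ) = B.bracket z ψ)
    (hrel : B.bracket η (B.bracket z ψ) + B.bracket z (B.bracket η ψ) +
      B.bracket z (B.bracket z D) = B.bracket η ψ + B.bracket z D) :
    B.bracket z (B.bracket z (D - B.bracket ((2⁻¹ : ℝ) • (η - B.bracket z η)) ψ)) =
      B.bracket z (D - B.bracket ((2⁻¹ : ℝ) • (η - B.bracket z η)) ψ) := by
  set a := (2⁻¹ : ℝ) • (η + B.bracket z η) with hadef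
  set b := (2⁻¹ : ℝ) • (η - B.bracket z η) with hbdef
  have ea : B.bracket z a = (1 : ℝ) • a := by
    rw [hadef, map_smul, map_add, hη]; module
  have eb : B.bracket z b = (-1 : ℝ) • b := by
    rw [hbdef, map_smul, map_sub, hη]; module
  have hab : a + b = η := by rw [hadef, hbdef]; module
  set ψ1 := B.bracket z ψ with hψ1def
  set ψ0 := ψ - ψ1 with hψ0def
  have eψ1 : B.bracket z ψ1 = (1 : ℝ) • ψ1 := by rw [one_smul, hψ1def]; exact hψ
  have eψ0 : B.bracket z ψ0 = (0 : ℝ) • ψ0 := by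
    rw [zero_smul, hψ0def, map_sub, ← hψ1def, hψ, sub_self]
  have hψsum : ψ0 + ψ1 = ψ := by rw [hψ0def]; abel
  have haψ1 : B.bracket a ψ1 = 0 := by
    refine B.eigen_vanish z h3v (s := 2) ?_ (by norm_num)
    rw [B.eig_bracket z ea eψ1]; norm_num
  have e1 : B.bracket z (B.bracket a ψ0) = B.bracket a ψ0 := by
    rw [B.eig_bracket z ea eψ0]; norm_num
  have e2 : B.bracket z (B.bracket b ψ0) = -(B.bracket b ψ0) := by
    rw [B.eig_bracket z eb eψ0]; norm_num
  have e3 : B.bracket z (B.bracket b ψ1) = 0 := by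
    rw [B.eig_bracket z eb eψ1]; norm_num
  have hEψ : B.bracket η ψ = B.bracket a ψ0 + B.bracket b ψ0 + B.bracket b ψ1 := by
    conv_lhs => rw [← hab, ← hψsum]
    simp only [map_add, LinearMap.add_apply, haψ1]
    abel
  have h4 : B.bracket η ψ1 = B.bracket b ψ1 := by
    conv_lhs => rw [← hab]
    simp only [map_add, LinearMap.add_apply, haψ1, zero_add]
  have h5 : B.bracket z (B.bracket η ψ) = B.bracket a ψ0 - B.bracket b ψ0 := by
    rw [hEψ]
    simp only [map_add, e1, e2, e3, add_zero]
    abel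
  have hzzD : B.bracket z (B.bracket z D) =
      B.bracket z D + B.bracket b ψ0 + B.bracket b ψ0 := by
    have h := hrel
    rw [h4, h5, hEψ] at h
    calc B.bracket z (B.bracket z D)
        = (B.bracket b ψ1 + (B.bracket a ψ0 - B.bracket b ψ0) +
            B.bracket z (B.bracket z D)) -
          (B.bracket b ψ1 + (B.bracket a ψ0 - B.bracket b ψ0)) := by abel
      _ = (B.bracket a ψ0 + B.bracket b ψ0 + B.bracket b ψ1 + B.bracket z D) -
          (B.bracket b ψ1 + (B.bracket a ψ0 - B.bracket b ψ0)) := by rw [h]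
      _ = B.bracket z D + B.bracket b ψ0 + B.bracket b ψ0 := by abel
  have hbψ : B.bracket b ψ = B.bracket b ψ0 + B.bracket b ψ1 := by
    conv_lhs => rw [← hψsum]
    rw [map_add]
  have hzX : B.bracket z (D - B.bracket b ψ) = B.bracket z D + B.bracket b ψ0 := by
    rw [map_sub, hbψ, map_add, e2, e3, add_zero]
    abel
  rw [hzX, map_add, e2, hzzD]
  abel

lemma parallel_keyM {η ψ D : L} (hη : B.bracket z (B.bracket z η) = η)
    (hψ : B.bracket z (B.bracket z ψ) = -(B.bracket z ψ))
    (hrel : B.bracket η (B.bracket z ψ) + B.bracket z (B.bracket η ψ) +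
      B.bracket z (B.bracket z D) = -(B.bracket η ψ + B.bracket z D)) :
    B.bracket z (B.bracket z (D + B.bracket ((2⁻¹ : ℝ) • (η + B.bracket z η)) ψ)) =
      -(B.bracket z (D + B.bracket ((2⁻¹ : ℝ) • (η + B.bracket z η)) ψ)) := by
  set a := (2⁻¹ : ℝ) • (η + B.bracket z η) with hadef
  set b := (2⁻¹ : ℝ) • (η - B.bracket z η) with hbdef
  have ea : B.bracket z a = (1 : ℝ) • a := by
    rw [hadef, map_smul, map_add, hη]; module
  have eb : B.bracket z b = (-1 : ℝ) • b := by
    rw [hbdef, map_smul, map_sub, hη]; module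
  have hab : a + b = η := by rw [hadef, hbdef]; module
  set ψm := -(B.bracket z ψ) with hψmdef
  set ψ0 := ψ - ψm with hψ0def
  have eψm : B.bracket z ψm = (-1 : ℝ) • ψm := by
    rw [hψmdef, map_neg, hψ]; module
  have eψ0 : B.bracket z ψ0 = (0 : ℝ) • ψ0 := by
    rw [zero_smul, hψ0def, map_sub, eψm]; rw [hψmdef]; module
  have hψsum : ψ0 + ψm = ψ := by rw [hψ0def]; abel
  have hbψm : B.bracket b ψm = 0 := by
    refine B.eigen_vanish z h3v (s := -2) ?_ (by norm_num)
    rw [B.eig_bracket z eb eψm]; norm_num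
  have e1 : B.bracket z (B.bracket a ψ0) = B.bracket a ψ0 := by
    rw [B.eig_bracket z ea eψ0]; norm_num
  have e2 : B.bracket z (B.bracket a ψm) = 0 := by
    rw [B.eig_bracket z ea eψm]; norm_num
  have e3 : B.bracket z (B.bracket b ψ0) = -(B.bracket b ψ0) := by
    rw [B.eig_bracket z eb eψ0]; norm_num
  have hEψ : B.bracket η ψ = B.bracket a ψ0 + B.bracket a ψm + B.bracket b ψ0 := by
    conv_lhs => rw [← hab, ← hψsum]
    simp only [map_add, LinearMap.add_apply, hbψm]
    abel
  have h4 : B.bracket η (B.bracket z ψ) = -(B.bracket a ψm) := by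
    have hzψ : B.bracket z ψ = -ψm := by rw [hψmdef, neg_neg]
    rw [hzψ, map_neg]
    conv_lhs => rw [← hab]
    simp only [map_add, LinearMap.add_apply, hbψm, add_zero]
  have h5 : B.bracket z (B.bracket η ψ) = B.bracket a ψ0 - B.bracket b ψ0 := by
    rw [hEψ]
    simp only [map_add, e1, e2, e3, add_zero]
    abel
  have hzzD : B.bracket z (B.bracket z D) =
      -(B.bracket z D) - B.bracket a ψ0 - B.bracket a ψ0 := by
    have h := hrel
    rw [h4, h5, hEψ] at h
    calc B.bracket z (B.bracket z D)
        = (-(B.bracket a ψm) + (B.bracket a ψ0 - B.bracket b ψ0) +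
            B.bracket z (B.bracket z D)) -
          (-(B.bracket a ψm) + (B.bracket a ψ0 - B.bracket b ψ0)) := by abel
      _ = (-(B.bracket a ψ0 + B.bracket a ψm + B.bracket b ψ0 + B.bracket z D)) -
          (-(B.bracket a ψm) + (B.bracket a ψ0 - B.bracket b ψ0)) := by rw [h]
      _ = -(B.bracket z D) - B.bracket a ψ0 - B.bracket a ψ0 := by abel
  have haψ : B.bracket a ψ = B.bracket a ψ0 + B.bracket a ψm := by
    conv_lhs => rw [← hψsum]
    rw [map_add]
  have hzX : B.bracket z (D + B.bracket a ψ) = B.bracket z D + B.bracket a ψ0 := by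
    rw [map_add, haψ, map_add, e1, e2, add_zero]
  rw [hzX, map_add, e1, hzzD]
  abel

end VectorKeys
end LieStructure

namespace LieStructure
variable {L : Type*} [NormedAddCommGroup L] [NormedSpace ℝ L] (B : LieStructure L)
variable [FiniteDimensional ℝ L]
variable {E : Type*} [NormedAddCommGroup E] [NormedSpace ℝ E]

lemma h3v_of_conf {z : L} (hconf3 : (B.ad z) ^ 3 = B.ad z) :
    ∀ w, B.bracket z (B.bracket z (B.bracket z w)) = B.bracket z w := fun w => by
  have := LinearMap.congr_fun hconf3 w
  simpa [pow_succ, Module.End.mul_apply, ad] using this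

lemma beta_apply (ξ : E → L) (x : E) (u : E) :
    B.beta ξ x u = (2⁻¹ : ℝ) • (B.bracket (ξ x) (B.bracket (ξ x) (fderiv ℝ ξ x u)) +
      B.bracket (ξ x) (fderiv ℝ ξ x u)) := by
  simp [beta, ad, pow_succ, Module.End.mul_apply]

lemma betaHat_apply (ξ : E → L) (x : E) (u : E) :
    B.betaHat ξ x u = -((2⁻¹ : ℝ) • (B.bracket (ξ x) (B.bracket (ξ x) (fderiv ℝ ξ x u)) -
      B.bracket (ξ x) (fderiv ℝ ξ x u))) := by
  simp [betaHat, ad, pow_succ, Module.End.mul_apply]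

section Analysis
variable {U : Set E} (hU : IsOpen U) {ξ : E → L} {x : E} (hx : x ∈ U)
include hU hx

/-- differentiating the pointwise identity `(ad ξ)³ = ad ξ` -/
lemma hstar (hξ : ContDiffOn ℝ (⊤ : ℕ∞) ξ U)
    (hconf : ∀ y ∈ U, (B.ad (ξ y)) ^ 3 = B.ad (ξ y)) (u : E) (w : L) :
    B.bracket (fderiv ℝ ξ x u) (B.bracket (ξ x) (B.bracket (ξ x) w)) +
      B.bracket (ξ x) (B.bracket (fderiv ℝ ξ x u) (B.bracket (ξ x) w)) +
      B.bracket (ξ x) (B.bracket (ξ x) (B.bracket (fderiv ℝ ξ x u) w)) =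
      B.bracket (fderiv ℝ ξ x u) w := by
  have hCA : ContDiffAt ℝ (⊤ : ℕ∞) ξ x := hξ.contDiffAt (hU.mem_nhds hx)
  have hξx : HasFDerivAt ξ (fderiv ℝ ξ x) x :=
    (hCA.differentiableAt (by simp)).hasFDerivAt
  have h1 := B.hasFDerivAt_bracket hξx (hasFDerivAt_const w x)
  have h2 := B.hasFDerivAt_bracket hξx h1
  have h3 := B.hasFDerivAt_bracket hξx h2
  have h4 := h3.sub h1
  have hev : (fun y => B.bracket (ξ y) (B.bracket (ξ y) (B.bracket (ξ y) w)) -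
      B.bracket (ξ y) w) =ᶠ[nhds x] (fun _ => (0 : L)) := by
    filter_upwards [hU.mem_nhds hx] with y hy
    rw [B.h3v_of_conf (hconf y hy) w, sub_self]
  have h5 : HasFDerivAt (fun y => B.bracket (ξ y) (B.bracket (ξ y) (B.bracket (ξ y) w)) -
      B.bracket (ξ y) w) (0 : E →L[ℝ] L) x :=
    (hasFDerivAt_const (0 : L) x).congr_of_eventuallyEq hev
  have hD := h4.unique h5
  have happ := DFunLike.congr_fun hD u
  simp only [ContinuousLinearMap.sub_apply, brD_apply, ContinuousLinearMap.zero_apply,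
    map_zero, zero_add, add_zero, map_add] at happ
  have h6 := sub_eq_zero.mp happ
  conv_rhs => rw [← h6]
  abel

/-- differentiating a pointwise identity `[ξ,[ξ,ψ]] = ε•[ξ,ψ]` -/
lemma psi_rel (hξ : ContDiffOn ℝ (⊤ : ℕ∞) ξ U) {ψ : E → L}
    (hψ : ContDiffOn ℝ (⊤ : ℕ∞) ψ U) (ε : ℝ)
    (hzero : ∀ y ∈ U, B.bracket (ξ y) (B.bracket (ξ y) (ψ y)) = ε • B.bracket (ξ y) (ψ y))
    (u : E) :
    B.bracket (fderiv ℝ ξ x u) (B.bracket (ξ x) (ψ x)) +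
      B.bracket (ξ x) (B.bracket (fderiv ℝ ξ x u) (ψ x)) +
      B.bracket (ξ x) (B.bracket (ξ x) (fderiv ℝ ψ x u)) =
      ε • (B.bracket (fderiv ℝ ξ x u) (ψ x) + B.bracket (ξ x) (fderiv ℝ ψ x u)) := by
  have hξx : HasFDerivAt ξ (fderiv ℝ ξ x) x :=
    ((hξ.contDiffAt (hU.mem_nhds hx)).differentiableAt (by simp)).hasFDerivAt
  have hψx : HasFDerivAt ψ (fderiv ℝ ψ x) x :=
    ((hψ.contDiffAt (hU.mem_nhds hx)).differentiableAt (by simp)).hasFDerivAt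
  have h1 := B.hasFDerivAt_bracket hξx hψx
  have h2 := B.hasFDerivAt_bracket hξx h1
  have h4 := h2.sub (h1.const_smul ε)
  have hev : (fun y => B.bracket (ξ y) (B.bracket (ξ y) (ψ y)) -
      ε • B.bracket (ξ y) (ψ y)) =ᶠ[nhds x] (fun _ => (0 : L)) := by
    filter_upwards [hU.mem_nhds hx] with y hy
    rw [hzero y hy, sub_self]
  have h5 : HasFDerivAt (fun y => B.bracket (ξ y) (B.bracket (ξ y) (ψ y)) -
      ε • B.bracket (ξ y) (ψ y)) (0 : E →L[ℝ] L) x :=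
    (hasFDerivAt_const (0 : L) x).congr_of_eventuallyEq hev
  have hD := h4.unique h5
  have happ := DFunLike.congr_fun hD u
  simp only [ContinuousLinearMap.sub_apply, ContinuousLinearMap.smul_apply, brD_apply,
    map_add, smul_add] at happ
  have h6 := sub_eq_zero.mp happ
  conv_rhs => rw [smul_add, add_comm, ← h6]
  abel

end Analysis
end LieStructure

namespace LieStructure
variable {L : Type*} [NormedAddCommGroup L] [NormedSpace ℝ L] (B : LieStructure L)
variable [FiniteDimensional ℝ L]
variable {E : Type*} [NormedAddCommGroup E] [NormedSpace ℝ E]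
variable {U : Set E} (hU : IsOpen U) {ξ : E → L} {x : E} (hx : x ∈ U)
include hU hx

lemma beta_fderiv (hξ : ContDiffOn ℝ (⊤ : ℕ∞) ξ U) :
    DifferentiableAt ℝ (fun y => B.beta ξ y) x ∧
    ∀ u v : E, fderiv ℝ (fun y => B.beta ξ y) x u v =
      (2⁻¹ : ℝ) • (B.bracket (ξ x) (B.bracket (ξ x) (fderiv ℝ (fderiv ℝ ξ) x u v)) +
        B.bracket (ξ x) (B.bracket (fderiv ℝ ξ x u) (fderiv ℝ ξ x v)) +
        B.bracket (fderiv ℝ ξ x u) (B.bracket (ξ x) (fderiv ℝ ξ x v)) +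
        (B.bracket (ξ x) (fderiv ℝ (fderiv ℝ ξ) x u v) +
         B.bracket (fderiv ℝ ξ x u) (fderiv ℝ ξ x v))) := by
  have hCA : ContDiffAt ℝ (⊤ : ℕ∞) ξ x := hξ.contDiffAt (hU.mem_nhds hx)
  have hξx : HasFDerivAt ξ (fderiv ℝ ξ x) x :=
    (hCA.differentiableAt (by simp)).hasFDerivAt
  have hT : HasFDerivAt (fderiv ℝ ξ) (fderiv ℝ (fderiv ℝ ξ) x) x := by
    have h1 : ContDiffAt ℝ 1 (fderiv ℝ ξ) x :=
      hCA.fderiv_right (m := 1) (by norm_cast)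
    exact (h1.differentiableAt one_ne_zero).hasFDerivAt
  have hc : HasFDerivAt (fun y => B.bc (ξ y)) (B.bc.comp (fderiv ℝ ξ x)) x :=
    (B.bc.hasFDerivAt.comp x hξx : _)
  have h0 := hc.clm_comp hT
  have h1 := hc.clm_comp h0
  have h2 := (h1.add h0).const_smul (2⁻¹ : ℝ)
  have hfun : (fun y => B.beta ξ y) = fun y => (2⁻¹ : ℝ) •
      ((B.bc (ξ y)).comp ((B.bc (ξ y)).comp (fderiv ℝ ξ y)) +
        (B.bc (ξ y)).comp (fderiv ℝ ξ y)) := by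
    funext y; ext v
    simp [beta, ad, pow_succ, Module.End.mul_apply]
  rw [hfun]
  refine ⟨h2.differentiableAt, fun u v => ?_⟩
  have h2f := h2.fderiv
  simp only [Pi.smul_def, Pi.add_def, Pi.sub_def] at h2f
  rw [h2f]
  simp only [ContinuousLinearMap.smul_apply, ContinuousLinearMap.add_apply,
    ContinuousLinearMap.coe_comp', Function.comp_apply, ContinuousLinearMap.compL_apply,
    ContinuousLinearMap.flip_apply, bc_apply, map_add, map_sub]
  try module

lemma betaHat_fderiv (hξ : ContDiffOn ℝ (⊤ : ℕ∞) ξ U) :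
    DifferentiableAt ℝ (fun y => B.betaHat ξ y) x ∧
    ∀ u v : E, fderiv ℝ (fun y => B.betaHat ξ y) x u v =
      (-(2⁻¹ : ℝ)) • (B.bracket (ξ x) (B.bracket (ξ x) (fderiv ℝ (fderiv ℝ ξ) x u v)) +
        B.bracket (ξ x) (B.bracket (fderiv ℝ ξ x u) (fderiv ℝ ξ x v)) +
        B.bracket (fderiv ℝ ξ x u) (B.bracket (ξ x) (fderiv ℝ ξ x v)) -
        (B.bracket (ξ x) (fderiv ℝ (fderiv ℝ ξ) x u v) +
         B.bracket (fderiv ℝ ξ x u) (fderiv ℝ ξ x v))) := by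
  have hCA : ContDiffAt ℝ (⊤ : ℕ∞) ξ x := hξ.contDiffAt (hU.mem_nhds hx)
  have hξx : HasFDerivAt ξ (fderiv ℝ ξ x) x :=
    (hCA.differentiableAt (by simp)).hasFDerivAt
  have hT : HasFDerivAt (fderiv ℝ ξ) (fderiv ℝ (fderiv ℝ ξ) x) x := by
    have h1 : ContDiffAt ℝ 1 (fderiv ℝ ξ) x :=
      hCA.fderiv_right (m := 1) (by norm_cast)
    exact (h1.differentiableAt one_ne_zero).hasFDerivAt
  have hc : HasFDerivAt (fun y => B.bc (ξ y)) (B.bc.comp (fderiv ℝ ξ x)) x :=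
    (B.bc.hasFDerivAt.comp x hξx : _)
  have h0 := hc.clm_comp hT
  have h1 := hc.clm_comp h0
  have h2 := (h1.sub h0).const_smul (-(2⁻¹ : ℝ))
  have hfun : (fun y => B.betaHat ξ y) = fun y => (-(2⁻¹ : ℝ)) •
      ((B.bc (ξ y)).comp ((B.bc (ξ y)).comp (fderiv ℝ ξ y)) -
        (B.bc (ξ y)).comp (fderiv ℝ ξ y)) := by
    funext y; ext v
    simp [betaHat, ad, pow_succ, Module.End.mul_apply]
  rw [hfun]
  refine ⟨h2.differentiableAt, fun u v => ?_⟩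
  have h2f := h2.fderiv
  simp only [Pi.smul_def, Pi.add_def, Pi.sub_def] at h2f
  rw [h2f]
  simp only [ContinuousLinearMap.smul_apply, ContinuousLinearMap.add_apply,
    ContinuousLinearMap.sub_apply, ContinuousLinearMap.coe_comp', Function.comp_apply,
    ContinuousLinearMap.compL_apply, ContinuousLinearMap.flip_apply, bc_apply, map_add, map_sub]
  try module

end LieStructure

/-- **Curved flats in the space of complementary pairs are Darboux pairs.**
For `φ = (f, f̂)` encoded by a complementary-pair configuration `ξ`, with
`𝒩 = −β − β̂`: `φ` is a curved flat (`⁅𝒩 ∧ 𝒩⁆ = 0`) iff `β` is closed iff `β̂` is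
closed; and in that case, for every `m ≠ 0`, `(f, β̂/m)` and `(f̂, β/m)` are
isothermic maps, each a Darboux transform of the other with parameter `m`. -/
theorem curved_flat_iff_darboux_pair
    {L : Type*} [NormedAddCommGroup L] [NormedSpace ℝ L] [FiniteDimensional ℝ L]
    (B : LieStructure L) (hss : B.IsSemisimple)
    {E : Type*} [NormedAddCommGroup E] [NormedSpace ℝ E] [FiniteDimensional ℝ E]
    (U : Set E) (hU : IsOpen U) (hUconn : IsConnected U)
    (ξ : E → L) (hξ : ContDiffOn ℝ (⊤ : ℕ∞) ξ U)
    (hconf : ∀ x ∈ U, (B.ad (ξ x)) ^ 3 = B.ad (ξ x)) :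
    -- (i) ↔ (ii)
    ((∀ x ∈ U, ∀ u v : E,
        B.bracket (-(B.beta ξ x u) - B.betaHat ξ x u)
          (-(B.beta ξ x v) - B.betaHat ξ x v) = 0) ↔
      (∀ x ∈ U, ∀ u v : E,
        fderiv ℝ (fun y => B.beta ξ y) x u v = fderiv ℝ (fun y => B.beta ξ y) x v u)) ∧
    -- (ii) ↔ (iii)
    ((∀ x ∈ U, ∀ u v : E,
        fderiv ℝ (fun y => B.beta ξ y) x u v = fderiv ℝ (fun y => B.beta ξ y) x v u) ↔
      (∀ x ∈ U, ∀ u v : E,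
        fderiv ℝ (fun y => B.betaHat ξ y) x u v =
        fderiv ℝ (fun y => B.betaHat ξ y) x v u)) ∧
    -- when these hold, `(f, β̂/m)` and `(f̂, β/m)` form a Darboux pair
    ((∀ x ∈ U, ∀ u v : E,
        B.bracket (-(B.beta ξ x u) - B.betaHat ξ x u)
          (-(B.beta ξ x v) - B.betaHat ξ x v) = 0) →
      ∀ m : ℝ, m ≠ 0 →
        -- `(f, β̂/m)` is isothermic: `β̂/m` is closed and valued in `f^⊥ = 𝔤₋₁`
        (∀ x ∈ U, ∀ u : E, m⁻¹ • B.betaHat ξ x u ∈ B.eigSp (ξ x) (-1)) ∧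
        (∀ x ∈ U, ∀ u v : E,
          fderiv ℝ (fun y => m⁻¹ • B.betaHat ξ y) x u v =
          fderiv ℝ (fun y => m⁻¹ • B.betaHat ξ y) x v u) ∧
        -- `(f̂, β/m)` is isothermic: `β/m` is closed and valued in `f̂^⊥ = 𝔤₁`
        (∀ x ∈ U, ∀ u : E, m⁻¹ • B.beta ξ x u ∈ B.eigSp (ξ x) 1) ∧
        (∀ x ∈ U, ∀ u v : E,
          fderiv ℝ (fun y => m⁻¹ • B.beta ξ y) x u v =
          fderiv ℝ (fun y => m⁻¹ • B.beta ξ y) x v u) ∧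
        -- `f̂` is parallel for `d + m·(β̂/m)`: `f̂ = 𝒟_m f`
        (∀ ψ : E → L, ContDiffOn ℝ (⊤ : ℕ∞) ψ U →
          (∀ x ∈ U, ψ x ∈ B.eigSp (ξ x) 0 ⊔ B.eigSp (ξ x) 1) →
          ∀ x ∈ U, ∀ u : E,
            fderiv ℝ ψ x u + m • B.bracket (m⁻¹ • B.betaHat ξ x u) (ψ x) ∈
              B.eigSp (ξ x) 0 ⊔ B.eigSp (ξ x) 1) ∧
        -- `f` is parallel for `d + m·(β/m)`: `f = 𝒟_m f̂`
        (∀ ψ : E → L, ContDiffOn ℝ (⊤ : ℕ∞) ψ U →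
          (∀ x ∈ U, ψ x ∈ B.eigSp (ξ x) (-1) ⊔ B.eigSp (ξ x) 0) →
          ∀ x ∈ U, ∀ u : E,
            fderiv ℝ ψ x u + m • B.bracket (m⁻¹ • B.beta ξ x u) (ψ x) ∈
              B.eigSp (ξ x) (-1) ⊔ B.eigSp (ξ x) 0)) := by
  classical
  have h3vU : ∀ y ∈ U, ∀ w, B.bracket (ξ y) (B.bracket (ξ y) (B.bracket (ξ y) w)) =
      B.bracket (ξ y) w := fun y hy => B.h3v_of_conf (hconf y hy)
  have hA2 : ∀ x ∈ U, ∀ u : E, B.bracket (ξ x) (B.bracket (ξ x) (fderiv ℝ ξ x u)) =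
      fderiv ℝ ξ x u := by
    intro x hx u
    exact B.eta0 (ξ x) (h3vU x hx) hss (fderiv ℝ ξ x u) (fun w => B.hstar hU hx hξ hconf u w)
  have hNu : ∀ x ∈ U, ∀ u : E, -(B.beta ξ x u) - B.betaHat ξ x u =
      -(B.bracket (ξ x) (fderiv ℝ ξ x u)) := by
    intro x hx u
    rw [B.beta_apply, B.betaHat_apply]
    module
  have hNN : ∀ x ∈ U, ∀ u v : E,
      B.bracket (-(B.beta ξ x u) - B.betaHat ξ x u) (-(B.beta ξ x v) - B.betaHat ξ x v) =
      B.bracket (B.bracket (ξ x) (fderiv ℝ ξ x u)) (B.bracket (ξ x) (fderiv ℝ ξ x v)) := by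
    intro x hx u v
    rw [hNu x hx u, hNu x hx v]
    simp only [map_neg, LinearMap.neg_apply, neg_neg]
  -- antisymmetrized derivative of β
  have hdβ : ∀ x ∈ U, ∀ u v : E,
      fderiv ℝ (fun y => B.beta ξ y) x u v - fderiv ℝ (fun y => B.beta ξ y) x v u =
      B.bracket (fderiv ℝ ξ x u) (fderiv ℝ ξ x v) := by
    intro x hx u v
    obtain ⟨hdiff, happ⟩ := B.beta_fderiv hU hx hξ
    have hsymm : fderiv ℝ (fderiv ℝ ξ) x u v = fderiv ℝ (fderiv ℝ ξ) x v u :=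
      (hξ.contDiffAt (hU.mem_nhds hx)).isSymmSndFDerivAt (by rw [minSmoothness_of_isRCLikeNormedField]; exact WithTop.coe_le_coe.mpr (le_top : (2 : ℕ∞) ≤ ⊤)) u v
    have hkey := (B.curved_key (ξ x) (h3vU x hx) (hA2 x hx u) (hA2 x hx v)).1
    have hder := B.der (ξ x) (fderiv ℝ ξ x u) (fderiv ℝ ξ x v)
    rw [hkey] at hder
    have hc : B.bracket (fderiv ℝ ξ x u) (B.bracket (ξ x) (fderiv ℝ ξ x v)) =
        -(B.bracket (B.bracket (ξ x) (fderiv ℝ ξ x u)) (fderiv ℝ ξ x v)) :=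
      eq_neg_of_add_eq_zero_right hder.symm
    rw [happ u v, happ v u, hsymm,
      B.antisymm (fderiv ℝ ξ x v) (fderiv ℝ ξ x u),
      B.antisymm (fderiv ℝ ξ x v) (B.bracket (ξ x) (fderiv ℝ ξ x u))]
    simp only [map_neg]
    rw [hkey, hc]
    module
  -- antisymmetrized derivative of β̂
  have hdβH : ∀ x ∈ U, ∀ u v : E,
      fderiv ℝ (fun y => B.betaHat ξ y) x u v - fderiv ℝ (fun y => B.betaHat ξ y) x v u =
      B.bracket (fderiv ℝ ξ x u) (fderiv ℝ ξ x v) := by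
    intro x hx u v
    obtain ⟨hdiff, happ⟩ := B.betaHat_fderiv hU hx hξ
    have hsymm : fderiv ℝ (fderiv ℝ ξ) x u v = fderiv ℝ (fderiv ℝ ξ) x v u :=
      (hξ.contDiffAt (hU.mem_nhds hx)).isSymmSndFDerivAt (by rw [minSmoothness_of_isRCLikeNormedField]; exact WithTop.coe_le_coe.mpr (le_top : (2 : ℕ∞) ≤ ⊤)) u v
    have hkey := (B.curved_key (ξ x) (h3vU x hx) (hA2 x hx u) (hA2 x hx v)).1
    have hder := B.der (ξ x) (fderiv ℝ ξ x u) (fderiv ℝ ξ x v)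
    rw [hkey] at hder
    have hc : B.bracket (fderiv ℝ ξ x u) (B.bracket (ξ x) (fderiv ℝ ξ x v)) =
        -(B.bracket (B.bracket (ξ x) (fderiv ℝ ξ x u)) (fderiv ℝ ξ x v)) :=
      eq_neg_of_add_eq_zero_right hder.symm
    rw [happ u v, happ v u, hsymm,
      B.antisymm (fderiv ℝ ξ x v) (fderiv ℝ ξ x u),
      B.antisymm (fderiv ℝ ξ x v) (B.bracket (ξ x) (fderiv ℝ ξ x u))]
    simp only [map_neg]
    rw [hkey, hc]
    module
  -- `(i)` is equivalent to the vanishing of `[Tu, Tv]`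
  have hflat_iff : ∀ x ∈ U, ∀ u v : E,
      (B.bracket (-(B.beta ξ x u) - B.betaHat ξ x u)
        (-(B.beta ξ x v) - B.betaHat ξ x v) = 0 ↔
       B.bracket (fderiv ℝ ξ x u) (fderiv ℝ ξ x v) = 0) := by
    intro x hx u v
    have hkey2 := (B.curved_key (ξ x) (h3vU x hx) (hA2 x hx u) (hA2 x hx v)).2
    rw [hNN x hx u v, hkey2, neg_eq_zero]
  refine ⟨⟨fun hflat x hx u v => ?_, fun hcl x hx u v => ?_⟩,
    ⟨fun hcl x hx u v => ?_, fun hcl x hx u v => ?_⟩, fun hflat m hm => ?_⟩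
  · -- (i) → (ii)
    have h1 := (hflat_iff x hx u v).mp (hflat x hx u v)
    have h2 := hdβ x hx u v
    rw [h1] at h2
    exact sub_eq_zero.mp h2
  · -- (ii) → (i)
    have h1 : B.bracket (fderiv ℝ ξ x u) (fderiv ℝ ξ x v) = 0 :=
      (hdβ x hx u v).symm.trans (sub_eq_zero_of_eq (hcl x hx u v))
    exact (hflat_iff x hx u v).mpr h1
  · -- (ii) → (iii)
    have h1 : B.bracket (fderiv ℝ ξ x u) (fderiv ℝ ξ x v) = 0 :=
      (hdβ x hx u v).symm.trans (sub_eq_zero_of_eq (hcl x hx u v))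
    have h2 := hdβH x hx u v
    rw [h1] at h2
    exact sub_eq_zero.mp h2
  · -- (iii) → (ii)
    have h1 : B.bracket (fderiv ℝ ξ x u) (fderiv ℝ ξ x v) = 0 :=
      (hdβH x hx u v).symm.trans (sub_eq_zero_of_eq (hcl x hx u v))
    have h2 := hdβ x hx u v
    rw [h1] at h2
    exact sub_eq_zero.mp h2
  -- Darboux pair conclusions
  have hTT0 : ∀ x ∈ U, ∀ u v : E, B.bracket (fderiv ℝ ξ x u) (fderiv ℝ ξ x v) = 0 :=
    fun x hx u v => (hflat_iff x hx u v).mp (hflat x hx u v)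
  refine ⟨?_, ?_, ?_, ?_, ?_, ?_⟩
  · -- β̂/m valued in 𝔤₋₁
    intro x hx u
    rw [B.mem_eigSp]
    have h : B.bracket (ξ x) (B.betaHat ξ x u) = -(B.betaHat ξ x u) := by
      rw [B.betaHat_apply, map_neg, map_smul, map_sub, h3vU x hx (fderiv ℝ ξ x u)]
      module
    rw [map_smul, h]
    module
  · -- β̂/m closed
    intro x hx u v
    obtain ⟨hdiffH, happH⟩ := B.betaHat_fderiv hU hx hξ
    rw [fderiv_fun_const_smul hdiffH m⁻¹]
    simp only [ContinuousLinearMap.smul_apply]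
    have h2 := hdβH x hx u v
    rw [hTT0 x hx u v] at h2
    rw [sub_eq_zero.mp h2]
  · -- β/m valued in 𝔤₁
    intro x hx u
    rw [B.mem_eigSp]
    have h : B.bracket (ξ x) (B.beta ξ x u) = B.beta ξ x u := by
      rw [B.beta_apply, map_smul, map_add, h3vU x hx (fderiv ℝ ξ x u)]
      module
    rw [map_smul, h, one_smul]
  · -- β/m closed
    intro x hx u v
    obtain ⟨hdiff, happ⟩ := B.beta_fderiv hU hx hξ
    rw [fderiv_fun_const_smul hdiff m⁻¹]
    simp only [ContinuousLinearMap.smul_apply]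
    have h2 := hdβ x hx u v
    rw [hTT0 x hx u v] at h2
    rw [sub_eq_zero.mp h2]
  · -- f̂ parallel for d + β̂
    intro ψ hψs hψmem x hx u
    have hψQ : ∀ y ∈ U, B.bracket (ξ y) (B.bracket (ξ y) (ψ y)) =
        (1 : ℝ) • B.bracket (ξ y) (ψ y) := fun y hy => by
      rw [one_smul]
      exact (B.mem_sup01 (ξ y) (h3vU y hy)).mp (hψmem y hy)
    have hrel := B.psi_rel hU hx hξ hψs 1 hψQ u
    rw [one_smul] at hrel
    have hconn : m • B.bracket (m⁻¹ • B.betaHat ξ x u) (ψ x) =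
        B.bracket (B.betaHat ξ x u) (ψ x) := by
      simp only [map_smul, LinearMap.smul_apply, smul_smul, mul_inv_cancel₀ hm, one_smul]
    have hβH : B.betaHat ξ x u =
        -((2⁻¹ : ℝ) • (fderiv ℝ ξ x u - B.bracket (ξ x) (fderiv ℝ ξ x u))) := by
      rw [B.betaHat_apply, hA2 x hx u]
    rw [B.mem_sup01 (ξ x) (h3vU x hx), hconn, hβH]
    have hneg : B.bracket (-((2⁻¹ : ℝ) •
        (fderiv ℝ ξ x u - B.bracket (ξ x) (fderiv ℝ ξ x u)))) (ψ x) =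
        -(B.bracket ((2⁻¹ : ℝ) •
          (fderiv ℝ ξ x u - B.bracket (ξ x) (fderiv ℝ ξ x u))) (ψ x)) := by
      simp only [map_neg, LinearMap.neg_apply]
    rw [hneg, ← sub_eq_add_neg]
    exact B.parallel_keyP (ξ x) (h3vU x hx) (hA2 x hx u)
      ((B.mem_sup01 (ξ x) (h3vU x hx)).mp (hψmem x hx)) hrel
  · -- f parallel for d + β
    intro ψ hψs hψmem x hx u
    have hψQ : ∀ y ∈ U, B.bracket (ξ y) (B.bracket (ξ y) (ψ y)) =
        (-1 : ℝ) • B.bracket (ξ y) (ψ y) := fun y hy => by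
      rw [neg_smul, one_smul]
      exact (B.mem_supm0 (ξ y) (h3vU y hy)).mp (hψmem y hy)
    have hrel := B.psi_rel hU hx hξ hψs (-1) hψQ u
    rw [neg_smul, one_smul] at hrel
    have hconn : m • B.bracket (m⁻¹ • B.beta ξ x u) (ψ x) =
        B.bracket (B.beta ξ x u) (ψ x) := by
      simp only [map_smul, LinearMap.smul_apply, smul_smul, mul_inv_cancel₀ hm, one_smul]
    have hβ : B.beta ξ x u =
        (2⁻¹ : ℝ) • (fderiv ℝ ξ x u + B.bracket (ξ x) (fderiv ℝ ξ x u)) := by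
      rw [B.beta_apply, hA2 x hx u]
    rw [B.mem_supm0 (ξ x) (h3vU x hx), hconn, hβ]
    exact B.parallel_keyM (ξ x) (h3vU x hx) (hA2 x hx u)
      ((B.mem_supm0 (ξ x) (h3vU x hx)).mp (hψmem x hx)) hrel
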